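/- Let S be a nonempty independent set of vertices of a complex unit hypergraph, i.e., every edge is incident to at most one vertex of S. Then vol(S) / |S| ≤ λ_max(K), where vol(S) = ∑_{v ∈ S} deg(v) and λ_max(K) is the largest eigenvalue of the Kirchhoff Laplacian. -/

import Mathlib

open Matrix

/-- Degree of vertex `i`: the number of edges `k` with `ω i k ≠ 0`. -/
noncomputable def deg {n m : ℕ} (ω : Fin n → Fin m → ℂ) (i : Fin n) : ℕ :=
  Nat.card {k : Fin m // ω i k ≠ 0}

/-- Incidence matrix of a complex unit hypergraph. -/
noncomputable def incM {n m : ℕ} (ω : Fin n → Fin m → ℂ) : Matrix (Fin n) (Fin m) ℂ :=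
  Matrix.of ω

/-- Largest eigenvalue of a Hermitian matrix. -/
noncomputable def lamMax {N : ℕ} (hN : 0 < N) {M : Matrix (Fin N) (Fin N) ℂ}
    (h : M.IsHermitian) : ℝ :=
  Finset.univ.sup' (Finset.univ_nonempty_iff.mpr ⟨⟨0, hN⟩⟩) h.eigenvalues

lemma quad_le {N : ℕ} {M : Matrix (Fin N) (Fin N) ℂ} (h : M.IsHermitian) (lam : ℝ)
    (hlam : ∀ i, h.eigenvalues i ≤ lam) (x : Fin N → ℂ) :
    (star x ⬝ᵥ (M *ᵥ x)).re ≤ lam * (star x ⬝ᵥ x).re := by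
  set U := (h.eigenvectorUnitary : Matrix (Fin N) (Fin N) ℂ) with hU
  set y := star U *ᵥ x with hy
  have hsy : star y = star x ᵥ* U := by
    rw [hy, star_mulVec, star_eq_conjTranspose, conjTranspose_conjTranspose]
  have hxy : star y ⬝ᵥ y = star x ⬝ᵥ x := by
    rw [hsy, hy, ← dotProduct_mulVec, mulVec_mulVec,
      (Matrix.mem_unitaryGroup_iff).mp h.eigenvectorUnitary.2, one_mulVec]
  have key : star x ⬝ᵥ (M *ᵥ x)
      = ∑ i, (h.eigenvalues i : ℂ) * (star (y i) * y i) := by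
    conv_lhs => rw [h.spectral_theorem, Unitary.conjStarAlgAut_apply]
    rw [← mulVec_mulVec, ← mulVec_mulVec, ← hU, ← hy, dotProduct_mulVec, ← hsy]
    simp [dotProduct, mulVec, diagonal, Finset.mul_sum, mul_comm, mul_left_comm, mul_assoc]
  have hnq : ∀ i, star (y i) * y i = (Complex.normSq (y i) : ℂ) := fun i => by
    rw [Complex.star_def, mul_comm, Complex.mul_conj]
  rw [key, ← hxy]
  have h1 : (∑ i, (h.eigenvalues i : ℂ) * (star (y i) * y i)).re
      = ∑ i, h.eigenvalues i * Complex.normSq (y i) := by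
    simp [hnq, ← Complex.ofReal_mul]
    norm_cast
  have h2 : (star y ⬝ᵥ y).re = ∑ i, Complex.normSq (y i) := by
    simp [dotProduct, hnq]
    norm_cast
  rw [h1, h2, Finset.mul_sum]
  exact Finset.sum_le_sum fun i _ =>
    mul_le_mul_of_nonneg_right (hlam i) (Complex.normSq_nonneg _)

/-- If `S` is a nonempty independent set (every edge is incident to at most one vertex
of `S`), then `vol(S)/|S| ≤ λ_max(K)`. -/
theorem stmt18 (n m : ℕ) (ω : Fin n → Fin m → ℂ)
    (hω : ∀ i k, ω i k = 0 ∨ ‖ω i k‖ = 1)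
    (S : Finset (Fin n)) (hS : S.Nonempty)
    (hind : ∀ k : Fin m, Nat.card {i : Fin n // i ∈ S ∧ ω i k ≠ 0} ≤ 1) :
    (∑ i ∈ S, (deg ω i : ℝ)) / (S.card : ℝ) ≤
      lamMax (Fin.pos hS.choose)
        (Matrix.isHermitian_mul_conjTranspose_self (incM ω)) := by
  set B := incM ω with hB
  set h := Matrix.isHermitian_mul_conjTranspose_self (incM ω)
  set lam := lamMax (Fin.pos hS.choose) h with hlamdef
  set x : Fin n → ℂ := fun i => if i ∈ S then 1 else 0 with hx
  have hlam : ∀ i, h.eigenvalues i ≤ lam :=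
    fun i => Finset.le_sup' h.eigenvalues (Finset.mem_univ i)
  have hbound := quad_le h lam hlam x
  -- norm of x
  have hxx : (star x ⬝ᵥ x).re = (S.card : ℝ) := by
    have : star x ⬝ᵥ x = (S.card : ℂ) := by
      simp [dotProduct, hx, apply_ite, Finset.sum_ite_mem]
    rw [this]; simp
  -- quadratic form
  set z := Bᴴ *ᵥ x with hz
  have hq : star x ⬝ᵥ ((B * Bᴴ) *ᵥ x) = star z ⬝ᵥ z := by
    rw [← mulVec_mulVec, dotProduct_mulVec]
    congr 1
    rw [hz, star_mulVec, conjTranspose_conjTranspose]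
  have hzk : ∀ k, z k = ∑ i ∈ S, (starRingEnd ℂ) (ω i k) := by
    intro k
    simp [hz, mulVec, dotProduct, hB, incM, conjTranspose, hx, apply_ite, mul_comm,
      Finset.sum_ite_mem]
  -- per edge identity
  have hedge : ∀ k, Complex.normSq (z k) = ∑ i ∈ S, Complex.normSq (ω i k) := by
    intro k
    classical
    set T := S.filter (fun i => ω i k ≠ 0) with hT
    have hcardT : Nat.card {i : Fin n // i ∈ S ∧ ω i k ≠ 0} = T.card := by
      rw [Nat.card_eq_fintype_card, Fintype.card_subtype]
      congr 1; ext i; simp [hT]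
    have hTle : T.card ≤ 1 := hcardT ▸ hind k
    have hsum : ∑ i ∈ S, (starRingEnd ℂ) (ω i k) = ∑ i ∈ T, (starRingEnd ℂ) (ω i k) := by
      rw [hT, Finset.sum_filter]
      apply Finset.sum_congr rfl
      intro i _
      by_cases hi : ω i k = 0 <;> simp [hi]
    have hsum2 : ∑ i ∈ S, Complex.normSq (ω i k) = ∑ i ∈ T, Complex.normSq (ω i k) := by
      rw [hT, Finset.sum_filter]
      apply Finset.sum_congr rfl
      intro i _
      by_cases hi : ω i k = 0 <;> simp [hi]
    rw [hzk k, hsum, hsum2]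
    interval_cases hc : T.card
    · rw [Finset.card_eq_zero] at hc
      simp [hc]
    · obtain ⟨i₀, hi₀⟩ := Finset.card_eq_one.mp hc
      simp [hi₀, Complex.normSq_conj]
  -- total
  have hdeg : ∀ i, (deg ω i : ℝ) = ∑ k, Complex.normSq (ω i k) := by
    intro i
    classical
    have h1 : deg ω i = (Finset.univ.filter (fun k => ω i k ≠ 0)).card := by
      rw [deg, Nat.card_eq_fintype_card, Fintype.card_subtype]
    rw [h1]
    rw [Finset.card_filter]
    push_cast
    apply Finset.sum_congr rfl
    intro k _
    rcases hω i k with h0 | h1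
    · simp [h0]
    · have hne : ω i k ≠ 0 := by intro hc; simp [hc] at h1
      simp [hne, Complex.normSq_eq_norm_sq, h1]
  have hzz : (star z ⬝ᵥ z).re = ∑ i ∈ S, (deg ω i : ℝ) := by
    have : (star z ⬝ᵥ z).re = ∑ k, Complex.normSq (z k) := by
      simp [dotProduct, Complex.star_def, Complex.normSq_eq_conj_mul_self]
      norm_cast
    rw [this]
    calc ∑ k, Complex.normSq (z k) = ∑ k, ∑ i ∈ S, Complex.normSq (ω i k) := by
          exact Finset.sum_congr rfl fun k _ => hedge k
      _ = ∑ i ∈ S, ∑ k, Complex.normSq (ω i k) := Finset.sum_comm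
      _ = ∑ i ∈ S, (deg ω i : ℝ) := Finset.sum_congr rfl fun i _ => (hdeg i).symm
  rw [hq, hzz, hxx] at hbound
  have hpos : (0:ℝ) < S.card := by exact_mod_cast Finset.card_pos.mpr hS
  rw [div_le_iff₀ hpos]
  linarith [hbound]
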